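/- Let Ω = (-1/2,1/2)×(-L,0), let f(y) = (τ y² + 2τ L y)/4, and let u_y : Ω → ℝ with u_y(x,0) = 0, and ξ : Ω → ℝ be C¹. Define δ = E_h(u,ξ) - B(f) where E_h is the full energy and B(f) = -τ²L³/12 · 1 (width one). Then δ ≥ 0, and moreover ∬_Ω |u_{y,y} + ξ_y²/2 - f'(y)|² dxdy ≤ δ and ∬_{(-1/2,1/2)×(-L/2,0)} ξ_y² dxdy ≤ 8δ/(τL). -/

import Mathlib

open MeasureTheory

/-- Partial derivative in the first variable. -/
noncomputable def pdx (f : ℝ → ℝ → ℝ) (x y : ℝ) : ℝ := deriv (fun s => f s y) x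

/-- Partial derivative in the second variable. -/
noncomputable def pdy (f : ℝ → ℝ → ℝ) (x y : ℝ) : ℝ := deriv (fun t => f x t) y

/-- The Föppl–von Kármán energy (Poisson ratio 0) of the deformation
`(u, ξ)`, `u = (ux, uy)`, on the rectangle `(-W, W) × (-L, 0)`, with
bending coefficient `h` and gravity coefficient `τ`.  The first group of
terms is the squared Frobenius norm of `e(u) + ½ ∇ξ ⊗ ∇ξ`, the second is
`h²` times the squared Frobenius norm of the Hessian of `ξ`, and the last
is the gravitational term. -/
noncomputable def fvkEnergy (h τ W L : ℝ) (ux uy ξ : ℝ → ℝ → ℝ) : ℝ :=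
  ∫ p in (Set.Ioo (-W) W ×ˢ Set.Ioo (-L) (0:ℝ)),
    ((pdx ux p.1 p.2 + (pdx ξ p.1 p.2) ^ 2 / 2) ^ 2
      + (1/2) * (pdy ux p.1 p.2 + pdx uy p.1 p.2
          + pdx ξ p.1 p.2 * pdy ξ p.1 p.2) ^ 2
      + (pdy uy p.1 p.2 + (pdy ξ p.1 p.2) ^ 2 / 2) ^ 2
      + h ^ 2 * ((pdx (pdx ξ) p.1 p.2) ^ 2 + 2 * (pdy (pdx ξ) p.1 p.2) ^ 2
          + (pdy (pdy ξ) p.1 p.2) ^ 2)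
      + τ * uy p.1 p.2)

lemma sliceX {F : ℝ × ℝ → ℝ} {x y : ℝ} (hF : DifferentiableAt ℝ F (x, y)) :
    HasDerivAt (fun s => F (s, y)) (fderiv ℝ F (x, y) (1, 0)) x :=
  hF.hasFDerivAt.comp_hasDerivAt x ((hasDerivAt_id x).prodMk (hasDerivAt_const x y))

lemma sliceY {F : ℝ × ℝ → ℝ} {x y : ℝ} (hF : DifferentiableAt ℝ F (x, y)) :
    HasDerivAt (fun t => F (x, t)) (fderiv ℝ F (x, y) (0, 1)) y :=
  hF.hasFDerivAt.comp_hasDerivAt y ((hasDerivAt_const y x).prodMk (hasDerivAt_id y))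

lemma pdx_repr {f : ℝ → ℝ → ℝ} (hf : Differentiable ℝ (fun p : ℝ × ℝ => f p.1 p.2))
    (x y : ℝ) : pdx f x y = fderiv ℝ (fun p : ℝ × ℝ => f p.1 p.2) (x, y) (1, 0) :=
  (sliceX (hf (x, y))).deriv

lemma pdy_repr {f : ℝ → ℝ → ℝ} (hf : Differentiable ℝ (fun p : ℝ × ℝ => f p.1 p.2))
    (x y : ℝ) : pdy f x y = fderiv ℝ (fun p : ℝ × ℝ => f p.1 p.2) (x, y) (0, 1) :=
  (sliceY (hf (x, y))).deriv

lemma contDiff_pdx {f : ℝ → ℝ → ℝ} {n : ℕ} (hf : ContDiff ℝ (n + 1) (fun p : ℝ × ℝ => f p.1 p.2)) :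
    ContDiff ℝ n (fun p : ℝ × ℝ => pdx f p.1 p.2) := by
  have : (fun p : ℝ × ℝ => pdx f p.1 p.2)
      = fun p : ℝ × ℝ => fderiv ℝ (fun p : ℝ × ℝ => f p.1 p.2) p (1, 0) := by
    funext p
    rw [pdx_repr (hf.differentiable (by simp))]
  rw [this]
  exact (hf.fderiv_right (by exact_mod_cast le_rfl)).clm_apply contDiff_const

lemma contDiff_pdy {f : ℝ → ℝ → ℝ} {n : ℕ} (hf : ContDiff ℝ (n + 1) (fun p : ℝ × ℝ => f p.1 p.2)) :
    ContDiff ℝ n (fun p : ℝ × ℝ => pdy f p.1 p.2) := by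
  have : (fun p : ℝ × ℝ => pdy f p.1 p.2)
      = fun p : ℝ × ℝ => fderiv ℝ (fun p : ℝ × ℝ => f p.1 p.2) p (0, 1) := by
    funext p
    rw [pdy_repr (hf.differentiable (by simp))]
  rw [this]
  exact (hf.fderiv_right (by exact_mod_cast le_rfl)).clm_apply contDiff_const

lemma integrableOn_rect {g : ℝ × ℝ → ℝ} (hg : Continuous g) (a b c d : ℝ) :
    IntegrableOn g (Set.Ioo a b ×ˢ Set.Ioo c d) :=
  (hg.continuousOn.integrableOn_compact (isCompact_Icc.prod isCompact_Icc)).mono_set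
    (Set.prod_mono Set.Ioo_subset_Icc_self Set.Ioo_subset_Icc_self)

/-- The boundary-term integral of the cross term vanishes. -/
lemma cross_integral_zero (τ L : ℝ) (hL : 0 < L) (uy : ℝ → ℝ → ℝ)
    (huy : ContDiff ℝ 2 (fun p : ℝ × ℝ => uy p.1 p.2))
    (hbc : ∀ x : ℝ, uy x 0 = 0)
    (ccross : Continuous fun p : ℝ × ℝ => τ * (p.2 + L) * pdy uy p.1 p.2 + τ * uy p.1 p.2) :
    (∫ p in Set.Ioo (-(1/2):ℝ) (1/2) ×ˢ Set.Ioo (-L) (0:ℝ),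
      (τ * (p.2 + L) * pdy uy p.1 p.2 + τ * uy p.1 p.2)) = 0 := by
  rw [Measure.volume_eq_prod]
  rw [setIntegral_prod _ (by rw [← Measure.volume_eq_prod]; exact integrableOn_rect ccross _ _ _ _)]
  have huyd : Differentiable ℝ (fun p : ℝ × ℝ => uy p.1 p.2) :=
    huy.differentiable (by norm_num)
  have hinner : ∀ x : ℝ,
      (∫ y in Set.Ioo (-L) (0:ℝ), (τ * (y + L) * pdy uy x y + τ * uy x y)) = 0 := by
    intro x
    rw [← integral_Ioc_eq_integral_Ioo, ← intervalIntegral.integral_of_le (by linarith : -L ≤ (0:ℝ))]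
    have key : ∀ t ∈ Set.uIcc (-L) (0:ℝ),
        HasDerivAt (fun t => τ * (t + L) * uy x t)
          (τ * (t + L) * pdy uy x t + τ * uy x t) t := by
      intro t _
      have hdiff : DifferentiableAt ℝ (fun t => uy x t) t :=
        (huyd.comp ((differentiable_const x).prodMk differentiable_id)) t
      have hslice : HasDerivAt (fun t => uy x t) (pdy uy x t) t := hdiff.hasDerivAt
      have h1 : HasDerivAt (fun t : ℝ => τ * (t + L)) τ t := by
        simpa using ((hasDerivAt_id t).add_const L).const_mul τ
      have := h1.mul hslice
      refine this.congr_deriv ?_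
      ring
    have hint : IntervalIntegrable (fun t => τ * (t + L) * pdy uy x t + τ * uy x t)
        volume (-L) 0 := by
      have : Continuous fun t : ℝ => τ * (t + L) * pdy uy x t + τ * uy x t := by
        have := ccross.comp (Continuous.prodMk_right x)
        exact this
      exact this.intervalIntegrable _ _
    rw [intervalIntegral.integral_eq_sub_of_hasDerivAt key hint]
    simp [hbc x]
  simp [hinner]

/-- The integral of the squared 1D strain over the rectangle. -/
lemma fprime_sq_integral (τ L : ℝ) (hL : 0 < L) :
    (∫ p in Set.Ioo (-(1/2):ℝ) (1/2) ×ˢ Set.Ioo (-L) (0:ℝ),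
      (τ * (p.2 + L) / 2) ^ 2) = τ ^ 2 * L ^ 3 / 12 := by
  have cq : Continuous fun p : ℝ × ℝ => (τ * (p.2 + L) / 2) ^ 2 := by
    apply Continuous.pow
    exact (continuous_const.mul (continuous_snd.add continuous_const)).div_const 2
  rw [Measure.volume_eq_prod]
  rw [setIntegral_prod _ (by rw [← Measure.volume_eq_prod]; exact integrableOn_rect cq _ _ _ _)]
  have hinner : (∫ y in Set.Ioo (-L) (0:ℝ), (τ * (y + L) / 2) ^ 2) = τ ^ 2 * L ^ 3 / 12 := by
    rw [← integral_Ioc_eq_integral_Ioo, ← intervalIntegral.integral_of_le (by linarith : -L ≤ (0:ℝ))]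
    have key : ∀ t ∈ Set.uIcc (-L) (0:ℝ),
        HasDerivAt (fun t : ℝ => τ ^ 2 * (t + L) ^ 3 / 12) ((τ * (t + L) / 2) ^ 2) t := by
      intro t _
      have h1 : HasDerivAt (fun t : ℝ => t + L) 1 t := (hasDerivAt_id t).add_const L
      have h3 := ((h1.pow 3).const_mul (τ ^ 2)).div_const 12
      refine h3.congr_deriv ?_
      norm_num
      ring
    have hc : Continuous fun t : ℝ => (τ * (t + L) / 2) ^ 2 := by
      apply Continuous.pow
      exact (continuous_const.mul (continuous_id.add continuous_const)).div_const 2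
    rw [intervalIntegral.integral_eq_sub_of_hasDerivAt key (hc.intervalIntegrable _ _)]
    simp
  simp only [hinner, setIntegral_const, Real.volume_Ioo, smul_eq_mul]
  norm_num

theorem excess_energy_lower_bounds (h τ L : ℝ) (hL : 0 < L) (hτ : 0 < τ)
    (hτL : 4 ≤ τ * L)
    (ux uy ξ : ℝ → ℝ → ℝ)
    (hux : ContDiff ℝ 2 (fun p : ℝ × ℝ => ux p.1 p.2))
    (huy : ContDiff ℝ 2 (fun p : ℝ × ℝ => uy p.1 p.2))
    (hξ : ContDiff ℝ 3 (fun p : ℝ × ℝ => ξ p.1 p.2))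
    (hbc : ∀ x : ℝ, uy x 0 = 0) :
    0 ≤ fvkEnergy h τ (1/2) L ux uy ξ - (-τ^2 * L^3 / 12) ∧
    (∫ p in (Set.Ioo (-(1/2):ℝ) (1/2) ×ˢ Set.Ioo (-L) (0:ℝ)),
        (pdy uy p.1 p.2 + (pdy ξ p.1 p.2) ^ 2 / 2
          - deriv (fun y : ℝ => (τ * y^2 + 2 * τ * L * y) / 4) p.2) ^ 2) ≤
      fvkEnergy h τ (1/2) L ux uy ξ - (-τ^2 * L^3 / 12) ∧
    (∫ p in (Set.Ioo (-(1/2):ℝ) (1/2) ×ˢ Set.Ioo (-L/2) (0:ℝ)),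
        (pdy ξ p.1 p.2) ^ 2) ≤
      8 * (fvkEnergy h τ (1/2) L ux uy ξ - (-τ^2 * L^3 / 12)) / (τ * L) := by
  -- continuity facts
  have cpdx_ux : Continuous fun p : ℝ × ℝ => pdx ux p.1 p.2 :=
    (contDiff_pdx (n := 1) (by exact_mod_cast hux)).continuous
  have cpdy_ux : Continuous fun p : ℝ × ℝ => pdy ux p.1 p.2 :=
    (contDiff_pdy (n := 1) (by exact_mod_cast hux)).continuous
  have cpdx_uy : Continuous fun p : ℝ × ℝ => pdx uy p.1 p.2 :=
    (contDiff_pdx (n := 1) (by exact_mod_cast huy)).continuous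
  have cpdy_uy : Continuous fun p : ℝ × ℝ => pdy uy p.1 p.2 :=
    (contDiff_pdy (n := 1) (by exact_mod_cast huy)).continuous
  have hξx : ContDiff ℝ 2 (fun p : ℝ × ℝ => pdx ξ p.1 p.2) :=
    contDiff_pdx (n := 2) (by exact_mod_cast hξ)
  have hξy : ContDiff ℝ 2 (fun p : ℝ × ℝ => pdy ξ p.1 p.2) :=
    contDiff_pdy (n := 2) (by exact_mod_cast hξ)
  have cpdx_ξ : Continuous fun p : ℝ × ℝ => pdx ξ p.1 p.2 := hξx.continuous
  have cpdy_ξ : Continuous fun p : ℝ × ℝ => pdy ξ p.1 p.2 := hξy.continuous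
  have cξxx : Continuous fun p : ℝ × ℝ => pdx (pdx ξ) p.1 p.2 :=
    (contDiff_pdx (n := 0) (by exact_mod_cast hξx.of_le (by exact_mod_cast one_le_two))).continuous
  have cξxy : Continuous fun p : ℝ × ℝ => pdy (pdx ξ) p.1 p.2 :=
    (contDiff_pdy (n := 0) (by exact_mod_cast hξx.of_le (by exact_mod_cast one_le_two))).continuous
  have cξyy : Continuous fun p : ℝ × ℝ => pdy (pdy ξ) p.1 p.2 :=
    (contDiff_pdy (n := 0) (by exact_mod_cast hξy.of_le (by exact_mod_cast one_le_two))).continuous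
  have cuy : Continuous fun p : ℝ × ℝ => uy p.1 p.2 := huy.continuous
  -- the key pieces
  set A : ℝ × ℝ → ℝ := fun p => pdx ux p.1 p.2 + (pdx ξ p.1 p.2) ^ 2 / 2 with hA
  set B : ℝ × ℝ → ℝ := fun p =>
    pdy ux p.1 p.2 + pdx uy p.1 p.2 + pdx ξ p.1 p.2 * pdy ξ p.1 p.2 with hB
  set C : ℝ × ℝ → ℝ := fun p => pdy uy p.1 p.2 + (pdy ξ p.1 p.2) ^ 2 / 2 with hC
  set Hs : ℝ × ℝ → ℝ := fun p =>
    (pdx (pdx ξ) p.1 p.2) ^ 2 + 2 * (pdy (pdx ξ) p.1 p.2) ^ 2 + (pdy (pdy ξ) p.1 p.2) ^ 2 with hHs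
  set N : ℝ × ℝ → ℝ := fun p =>
    A p ^ 2 + (1/2) * B p ^ 2 + (C p - τ * (p.2 + L) / 2) ^ 2
      + τ * (p.2 + L) / 2 * (pdy ξ p.1 p.2) ^ 2 + h ^ 2 * Hs p with hN
  have cA : Continuous A := cpdx_ux.add ((cpdx_ξ.pow 2).div_const 2)
  have cB : Continuous B := (cpdy_ux.add cpdx_uy).add (cpdx_ξ.mul cpdy_ξ)
  have cC : Continuous C := cpdy_uy.add ((cpdy_ξ.pow 2).div_const 2)
  have cHs : Continuous Hs :=
    ((cξxx.pow 2).add (continuous_const.mul (cξxy.pow 2))).add (cξyy.pow 2)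
  have cf' : Continuous fun p : ℝ × ℝ => τ * (p.2 + L) / 2 :=
    (continuous_const.mul (continuous_snd.add continuous_const)).div_const 2
  have cN : Continuous N := by
    refine ((((cA.pow 2).add (continuous_const.mul (cB.pow 2))).add
      (((cC.sub cf').pow 2))).add (cf'.mul (cpdy_ξ.pow 2))).add
      (continuous_const.mul cHs)
  have ccross : Continuous fun p : ℝ × ℝ =>
      τ * (p.2 + L) * pdy uy p.1 p.2 + τ * uy p.1 p.2 :=
    ((continuous_const.mul (continuous_snd.add continuous_const)).mul cpdy_uy).add
      (continuous_const.mul cuy)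
  have cq : Continuous fun p : ℝ × ℝ => (τ * (p.2 + L) / 2) ^ 2 := cf'.pow 2
  clear_value A B C Hs N
  -- integrability
  have iN : IntegrableOn N (Set.Ioo (-(1/2):ℝ) (1/2) ×ˢ Set.Ioo (-L) (0:ℝ)) :=
    integrableOn_rect cN _ _ _ _
  have icross : IntegrableOn (fun p : ℝ × ℝ =>
      τ * (p.2 + L) * pdy uy p.1 p.2 + τ * uy p.1 p.2)
      (Set.Ioo (-(1/2):ℝ) (1/2) ×ˢ Set.Ioo (-L) (0:ℝ)) := integrableOn_rect ccross _ _ _ _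
  have iq : IntegrableOn (fun p : ℝ × ℝ => (τ * (p.2 + L) / 2) ^ 2)
      (Set.Ioo (-(1/2):ℝ) (1/2) ×ˢ Set.Ioo (-L) (0:ℝ)) := integrableOn_rect cq _ _ _ _
  have meas : MeasurableSet (Set.Ioo (-(1/2):ℝ) (1/2) ×ˢ Set.Ioo (-L) (0:ℝ)) :=
    measurableSet_Ioo.prod measurableSet_Ioo
  -- energy decomposition
  have hEN : fvkEnergy h τ (1/2) L ux uy ξ
      = (∫ p in Set.Ioo (-(1/2):ℝ) (1/2) ×ˢ Set.Ioo (-L) (0:ℝ), N p) - τ ^ 2 * L ^ 3 / 12 := by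
    have hpt : Set.EqOn
        (fun p : ℝ × ℝ =>
          (pdx ux p.1 p.2 + (pdx ξ p.1 p.2) ^ 2 / 2) ^ 2
            + (1/2) * (pdy ux p.1 p.2 + pdx uy p.1 p.2
                + pdx ξ p.1 p.2 * pdy ξ p.1 p.2) ^ 2
            + (pdy uy p.1 p.2 + (pdy ξ p.1 p.2) ^ 2 / 2) ^ 2
            + h ^ 2 * ((pdx (pdx ξ) p.1 p.2) ^ 2 + 2 * (pdy (pdx ξ) p.1 p.2) ^ 2
                + (pdy (pdy ξ) p.1 p.2) ^ 2)
            + τ * uy p.1 p.2)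
        (fun p : ℝ × ℝ => N p + ((τ * (p.2 + L) * pdy uy p.1 p.2 + τ * uy p.1 p.2)
          - (τ * (p.2 + L) / 2) ^ 2))
        (Set.Ioo (-(1/2):ℝ) (1/2) ×ˢ Set.Ioo (-L) (0:ℝ)) := by
      intro p _
      simp only [hN, hA, hB, hC, hHs]
      ring
    rw [fvkEnergy]
    rw [setIntegral_congr_fun meas hpt]
    have isub : IntegrableOn (fun p : ℝ × ℝ => (τ * (p.2 + L) * pdy uy p.1 p.2 + τ * uy p.1 p.2)
        - (τ * (p.2 + L) / 2) ^ 2) (Set.Ioo (-(1/2):ℝ) (1/2) ×ˢ Set.Ioo (-L) (0:ℝ)) :=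
      icross.sub iq
    rw [integral_add iN isub, integral_sub icross iq,
      cross_integral_zero τ L hL uy huy hbc ccross, fprime_sq_integral τ L hL]
    ring
  set δ := fvkEnergy h τ (1/2) L ux uy ξ - (-τ^2 * L^3 / 12) with hδ
  have hδN : δ = ∫ p in Set.Ioo (-(1/2):ℝ) (1/2) ×ˢ Set.Ioo (-L) (0:ℝ), N p := by
    rw [hδ, hEN]; ring
  clear_value δ
  have hf'nonneg : ∀ p : ℝ × ℝ, p ∈ Set.Ioo (-(1/2):ℝ) (1/2) ×ˢ Set.Ioo (-L) (0:ℝ) →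
      0 ≤ τ * (p.2 + L) / 2 := by
    intro p hp
    have : -L < p.2 := hp.2.1
    have : 0 ≤ p.2 + L := by linarith
    positivity
  have hNnonneg : ∀ p : ℝ × ℝ, p ∈ Set.Ioo (-(1/2):ℝ) (1/2) ×ˢ Set.Ioo (-L) (0:ℝ) →
      0 ≤ N p := by
    intro p hp
    have h0 := hf'nonneg p hp
    have hHs0 : 0 ≤ Hs p := by simp only [hHs]; positivity
    simp only [hN]
    have e1 := mul_nonneg h0 (sq_nonneg (pdy ξ p.1 p.2))
    have e2 := mul_nonneg (sq_nonneg h) hHs0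
    have e3 := sq_nonneg (A p); have e4 := sq_nonneg (B p)
    have e5 := sq_nonneg (C p - τ * (p.2 + L) / 2)
    linarith
  have hδ0 : 0 ≤ δ := by
    rw [hδN]
    exact setIntegral_nonneg meas hNnonneg
  refine ⟨hδ0, ?_, ?_⟩
  · -- second claim
    have hd : ∀ t : ℝ, deriv (fun y : ℝ => (τ * y^2 + 2 * τ * L * y) / 4) t
        = τ * (t + L) / 2 := by
      intro t
      have h1 : HasDerivAt (fun y : ℝ => (τ * y^2 + 2 * τ * L * y) / 4)
          ((τ * (2 * t ^ 1) + 2 * τ * L * 1) / 4) t := by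
        exact (((hasDerivAt_pow 2 t).const_mul τ).add
          ((hasDerivAt_id t).const_mul (2 * τ * L))).div_const 4
      rw [h1.deriv]; ring
    have hcongr : (∫ p in (Set.Ioo (-(1/2):ℝ) (1/2) ×ˢ Set.Ioo (-L) (0:ℝ)),
        (pdy uy p.1 p.2 + (pdy ξ p.1 p.2) ^ 2 / 2
          - deriv (fun y : ℝ => (τ * y^2 + 2 * τ * L * y) / 4) p.2) ^ 2)
        = ∫ p in (Set.Ioo (-(1/2):ℝ) (1/2) ×ˢ Set.Ioo (-L) (0:ℝ)),
            (C p - τ * (p.2 + L) / 2) ^ 2 := by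
      apply setIntegral_congr_fun meas
      intro p _
      simp only [hC, hd p.2]
    rw [hcongr, hδN]
    apply setIntegral_mono_on (integrableOn_rect ((cC.sub cf').pow 2) _ _ _ _) iN meas
    intro p hp
    have h0 := hf'nonneg p hp
    have hHs0 : 0 ≤ Hs p := by simp only [hHs]; positivity
    simp only [hN]
    have e1 := mul_nonneg h0 (sq_nonneg (pdy ξ p.1 p.2))
    have e2 := mul_nonneg (sq_nonneg h) hHs0
    have e3 := sq_nonneg (A p); have e4 := sq_nonneg (B p)
    simp only [Pi.pow_apply, Pi.sub_apply]
    linarith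
  · -- third claim
    have meas' : MeasurableSet (Set.Ioo (-(1/2):ℝ) (1/2) ×ˢ Set.Ioo (-L/2) (0:ℝ)) :=
      measurableSet_Ioo.prod measurableSet_Ioo
    have hsub : (Set.Ioo (-(1/2):ℝ) (1/2) ×ˢ Set.Ioo (-L/2) (0:ℝ))
        ⊆ (Set.Ioo (-(1/2):ℝ) (1/2) ×ˢ Set.Ioo (-L) (0:ℝ)) := by
      apply Set.prod_mono_right
      apply Set.Ioo_subset_Ioo_left
      linarith
    have ifxi : IntegrableOn (fun p : ℝ × ℝ => τ * (p.2 + L) / 2 * (pdy ξ p.1 p.2) ^ 2)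
        (Set.Ioo (-(1/2):ℝ) (1/2) ×ˢ Set.Ioo (-L) (0:ℝ)) :=
      integrableOn_rect (cf'.mul (cpdy_ξ.pow 2)) _ _ _ _
    have step1 : τ * L / 4 * (∫ p in (Set.Ioo (-(1/2):ℝ) (1/2) ×ˢ Set.Ioo (-L/2) (0:ℝ)),
        (pdy ξ p.1 p.2) ^ 2)
        ≤ ∫ p in (Set.Ioo (-(1/2):ℝ) (1/2) ×ˢ Set.Ioo (-L/2) (0:ℝ)),
            τ * (p.2 + L) / 2 * (pdy ξ p.1 p.2) ^ 2 := by
      rw [← integral_const_mul]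
      apply setIntegral_mono_on
        (((integrableOn_rect (cpdy_ξ.pow 2) _ _ _ _).const_mul (τ * L / 4)))
        (ifxi.mono_set hsub) meas'
      intro p hp
      have h1 : -L/2 < p.2 := hp.2.1
      have h2 : τ * L / 4 ≤ τ * (p.2 + L) / 2 := by
        nlinarith [mul_nonneg hτ.le (show (0:ℝ) ≤ p.2 + L/2 by linarith)]
      exact mul_le_mul_of_nonneg_right h2 (sq_nonneg _)
    have step2 : (∫ p in (Set.Ioo (-(1/2):ℝ) (1/2) ×ˢ Set.Ioo (-L/2) (0:ℝ)),
          τ * (p.2 + L) / 2 * (pdy ξ p.1 p.2) ^ 2)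
        ≤ ∫ p in (Set.Ioo (-(1/2):ℝ) (1/2) ×ˢ Set.Ioo (-L) (0:ℝ)),
            τ * (p.2 + L) / 2 * (pdy ξ p.1 p.2) ^ 2 := by
      apply setIntegral_mono_set ifxi
      · rw [Filter.EventuallyLE, ae_restrict_iff' meas]
        filter_upwards with p hp
        exact mul_nonneg (hf'nonneg p hp) (sq_nonneg _)
      · exact hsub.eventuallyLE
    have step3 : (∫ p in (Set.Ioo (-(1/2):ℝ) (1/2) ×ˢ Set.Ioo (-L) (0:ℝ)),
          τ * (p.2 + L) / 2 * (pdy ξ p.1 p.2) ^ 2)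
        ≤ ∫ p in Set.Ioo (-(1/2):ℝ) (1/2) ×ˢ Set.Ioo (-L) (0:ℝ), N p := by
      apply setIntegral_mono_on ifxi iN meas
      intro p hp
      have hHs0 : 0 ≤ Hs p := by simp only [hHs]; positivity
      simp only [hN]
      have e2 := mul_nonneg (sq_nonneg h) hHs0
      have e3 := sq_nonneg (A p); have e4 := sq_nonneg (B p)
      have e5 := sq_nonneg (C p - τ * (p.2 + L) / 2)
      linarith
    have key : τ * L / 4 * (∫ p in (Set.Ioo (-(1/2):ℝ) (1/2) ×ˢ Set.Ioo (-L/2) (0:ℝ)),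
        (pdy ξ p.1 p.2) ^ 2) ≤ δ := by
      rw [hδN]; linarith
    have hτL0 : 0 < τ * L := by positivity
    rw [le_div_iff₀ hτL0]
    nlinarith [key, hδ0]
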